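/- Let C ≥ 1 and let π^s, π^t : Fin C → ℝ be probability vectors (nonnegative entries summing to 1). Let ε_{t,i}, ε_{s,i} : Fin C → ℝ be nonnegative class-conditional errors bounded by 1, and suppose |ε_{t,i} - ε_{s,i}| ≤ d_i for each i, with d_i ≥ 0. Then |∑_i π^t_i ε_{t,i} - ∑_i π^s_i ε_{s,i}| ≤ ∑_i |π^t_i - π^s_i| + ∑_i min(π^s_i, π^t_i) · d_i. -/
import Mathlib

lemma term_bound (p q a b dd : ℝ) (hp : 0 ≤ p) (hq : 0 ≤ q)
    (ha : 0 ≤ a) (ha1 : a ≤ 1) (hb : 0 ≤ b) (hb1 : b ≤ 1)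
    (hab : |a - b| ≤ dd) :
    |q * a - p * b| ≤ |q - p| + min p q * dd := by
  rcases le_total p q with h | h
  · have : q * a - p * b = (q - p) * a + p * (a - b) := by ring
    rw [this, min_eq_left h]
    calc |(q - p) * a + p * (a - b)| ≤ |(q - p) * a| + |p * (a - b)| := abs_add_le _ _
      _ = |q - p| * |a| + p * |a - b| := by rw [abs_mul, abs_mul, abs_of_nonneg hp]
      _ ≤ |q - p| * 1 + p * dd := by
          gcongr
          · rw [abs_of_nonneg ha]; exact ha1
      _ = |q - p| + p * dd := by ring
  · have : q * a - p * b = (q - p) * b + q * (a - b) := by ring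
    rw [this, min_eq_right h]
    calc |(q - p) * b + q * (a - b)| ≤ |(q - p) * b| + |q * (a - b)| := abs_add_le _ _
      _ = |q - p| * |b| + q * |a - b| := by rw [abs_mul, abs_mul, abs_of_nonneg hq]
      _ ≤ |q - p| * 1 + q * dd := by
          gcongr
          · rw [abs_of_nonneg hb]; exact hb1
      _ = |q - p| + q * dd := by ring

theorem stmt_0 (C : ℕ) (hC : 1 ≤ C) (ps pt εs εt d : Fin C → ℝ)
    (hps_nonneg : ∀ i, 0 ≤ ps i) (hps_sum : ∑ i, ps i = 1)
    (hpt_nonneg : ∀ i, 0 ≤ pt i) (hpt_sum : ∑ i, pt i = 1)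
    (hεt : ∀ i, 0 ≤ εt i ∧ εt i ≤ 1)
    (hεs : ∀ i, 0 ≤ εs i ∧ εs i ≤ 1)
    (hd : ∀ i, 0 ≤ d i)
    (hdiff : ∀ i, |εt i - εs i| ≤ d i) :
    |(∑ i, pt i * εt i) - ∑ i, ps i * εs i| ≤
      (∑ i, |pt i - ps i|) + ∑ i, min (ps i) (pt i) * d i := by
  rw [← Finset.sum_sub_distrib, ← Finset.sum_add_distrib]
  calc |∑ i, (pt i * εt i - ps i * εs i)| ≤ ∑ i, |pt i * εt i - ps i * εs i| :=
        Finset.abs_sum_le_sum_abs _ _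
    _ ≤ ∑ i, (|pt i - ps i| + min (ps i) (pt i) * d i) := by
        apply Finset.sum_le_sum
        intro i _
        exact term_bound (ps i) (pt i) (εt i) (εs i) (d i) (hps_nonneg i) (hpt_nonneg i)
          (hεt i).1 (hεt i).2 (hεs i).1 (hεs i).2 (hdiff i)
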